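/- Let X₁, …, X_d be independent random variables each distributed as a standard Gaussian N(0,1). Then for any 0 < δ < 1, with probability at least 1 − δ, one has Σ_{i=1}^d X_i² ≤ d + 2·√(d·ln(1/δ)) + 2·ln(1/δ). -/

import Mathlib

open MeasureTheory ProbabilityTheory Real
open scoped ENNReal NNReal

lemma chi_integrable {l : ℝ} (hl : l < 1/2) :
    Integrable (fun x => rexp (l * x ^ 2)) (gaussianReal 0 1) := by
  rw [gaussianReal_of_var_ne_zero 0 one_ne_zero]
  have hmeas : Measurable fun x => (gaussianPDFReal 0 1 x).toNNReal :=
    (measurable_gaussianPDFReal 0 1).real_toNNReal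
  have : gaussianPDF 0 1 = fun x => ((gaussianPDFReal 0 1 x).toNNReal : ℝ≥0∞) := rfl
  rw [this, integrable_withDensity_iff_integrable_smul hmeas]
  have hb : (0:ℝ) < 1/2 - l := by linarith
  have := integrable_exp_neg_mul_sq hb
  apply (this.const_mul ((Real.sqrt (2 * π))⁻¹)).congr
  filter_upwards with x
  rw [NNReal.smul_def, smul_eq_mul, Real.coe_toNNReal _ (gaussianPDFReal_nonneg 0 1 x)]
  simp only [gaussianPDFReal, NNReal.coe_one, mul_one, sub_zero]
  rw [mul_comm, mul_assoc, ← Real.exp_add]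
  ring_nf

lemma chi_integral {l : ℝ} (hl : l < 1/2) :
    ∫ x, rexp (l * x ^ 2) ∂(gaussianReal 0 1) = (Real.sqrt (1 - 2*l))⁻¹ := by
  rw [gaussianReal_of_var_ne_zero 0 one_ne_zero]
  have hmeas : Measurable fun x => (gaussianPDFReal 0 1 x).toNNReal :=
    (measurable_gaussianPDFReal 0 1).real_toNNReal
  have h : gaussianPDF 0 1 = fun x => ((gaussianPDFReal 0 1 x).toNNReal : ℝ≥0∞) := rfl
  rw [h, integral_withDensity_eq_integral_smul hmeas]
  have hb : (0:ℝ) < 1/2 - l := by linarith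
  have key : ∀ x : ℝ, (gaussianPDFReal 0 1 x).toNNReal • rexp (l * x ^ 2)
      = (Real.sqrt (2 * π))⁻¹ * rexp (-(1/2 - l) * x ^ 2) := by
    intro x
    rw [NNReal.smul_def, smul_eq_mul, Real.coe_toNNReal _ (gaussianPDFReal_nonneg 0 1 x)]
    simp only [gaussianPDFReal, NNReal.coe_one, mul_one, sub_zero]
    rw [mul_assoc, ← Real.exp_add]
    ring_nf
  simp_rw [key]
  rw [integral_const_mul, integral_gaussian]
  rw [← Real.sqrt_inv, ← Real.sqrt_mul (by positivity)]
  congr 1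
  have hπ : π ≠ 0 := Real.pi_ne_zero
  have h3 : (1:ℝ)/2 - l ≠ 0 := ne_of_gt hb
  have h4 : (1:ℝ) - 2*l ≠ 0 := by intro h; apply h3; linarith
  have h5 : Real.sqrt π ≠ 0 := by positivity
  have h6 : Real.sqrt 2 ≠ 0 := by positivity
  field_simp
  have h7 : (0:ℝ) < 1 - 2*l := by linarith
  have h8 : Real.sqrt (1 - 2*l) ≠ 0 := by positivity
  rw [one_div, one_div, Real.sqrt_inv]

lemma chi_prod_integral (d : ℕ) {μ : Measure ℝ} [IsProbabilityMeasure μ] (f : ℝ → ℝ) :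
    ∫ x : Fin d → ℝ, ∏ i, f (x i) ∂(Measure.pi fun _ => μ) = (∫ x, f x ∂μ) ^ d := by
  induction d with
  | zero => simp
  | succ n ih =>
      have hmp := ((measurePreserving_piFinSuccAbove (fun _ : Fin (n+1) => μ) 0).symm)
      calc
        ∫ x : Fin (n+1) → ℝ, ∏ i, f (x i) ∂(Measure.pi fun _ => μ)
            = ∫ p : ℝ × (Fin n → ℝ), f p.1 * ∏ i : Fin n, f (p.2 i)
              ∂(μ.prod (Measure.pi fun _ : Fin n => μ)) := by
          rw [← hmp.integral_comp']
          simp_rw [MeasurableEquiv.piFinSuccAbove_symm_apply, Fin.insertNthEquiv,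
            Fin.prod_univ_succ, Fin.insertNth_zero, Equiv.coe_fn_mk, Fin.cons_succ]
          simp [Fin.cons_zero, cast_eq]
        _ = (∫ x, f x ∂μ) * ∫ x : Fin n → ℝ, ∏ i, f (x i) ∂(Measure.pi fun _ : Fin n => μ) := by
          rw [← integral_prod_mul]
        _ = (∫ x, f x ∂μ) ^ (n+1) := by rw [ih]; ring

lemma chi_prod_integrable (d : ℕ) {μ : Measure ℝ} [IsProbabilityMeasure μ] {f : ℝ → ℝ}
    (hf : Integrable f μ) :
    Integrable (fun x : Fin d → ℝ => ∏ i, f (x i)) (Measure.pi fun _ => μ) := by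
  induction d with
  | zero => simpa using integrable_const (1:ℝ)
  | succ n ih =>
      have hmp := ((measurePreserving_piFinSuccAbove (fun _ : Fin (n+1) => μ) 0).symm)
      rw [← hmp.integrable_comp_emb (MeasurableEquiv.measurableEmbedding _)]
      simp_rw [MeasurableEquiv.piFinSuccAbove_symm_apply, Fin.insertNthEquiv,
        Fin.prod_univ_succ, Fin.insertNth_zero]
      simp only [Fin.zero_succAbove, Function.comp_def, Fin.cons_zero, Fin.cons_succ,
        Equiv.coe_fn_mk]
      exact Integrable.mul_prod hf ih

set_option maxHeartbeats 1000000 in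
theorem chi_square_tail_bound (d : ℕ) (δ : ℝ) (hδ0 : 0 < δ) (hδ1 : δ < 1) :
    ENNReal.ofReal (1 - δ) ≤
      (Measure.pi fun _ : Fin d => gaussianReal 0 1)
        {x | ∑ i, (x i) ^ 2 ≤
          (d : ℝ) + 2 * Real.sqrt (d * Real.log (1 / δ)) + 2 * Real.log (1 / δ)} := by
  have ht : 0 < Real.log (1 / δ) := Real.log_pos ((one_lt_div hδ0).mpr hδ1)
  set t : ℝ := Real.log (1 / δ) with ht_def
  set μP : Measure (Fin d → ℝ) := Measure.pi fun _ : Fin d => gaussianReal 0 1 with hμP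
  have hPP : IsProbabilityMeasure μP := by infer_instance
  set a : ℝ := (d : ℝ) + 2 * Real.sqrt (d * t) + 2 * t with ha_def
  rcases Nat.eq_zero_or_pos d with hd0 | hdpos
  · subst hd0
    have hset : {x : Fin 0 → ℝ | ∑ i, (x i) ^ 2 ≤ a} = Set.univ := by
      ext x
      simp only [Set.mem_setOf_eq, Set.mem_univ, iff_true, Finset.univ_eq_empty,
        Finset.sum_empty]
      simp only [ha_def, Nat.cast_zero]
      positivity
    rw [hset, measure_univ]
    exact ENNReal.ofReal_le_one.mpr (by linarith)
  -- main case
  have hd1 : (1:ℝ) ≤ d := by exact_mod_cast hdpos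
  have hdR : (0:ℝ) < d := by linarith
  have hsq : 0 ≤ Real.sqrt (d * t) := Real.sqrt_nonneg _
  have had : (d:ℝ) < a := by simp only [ha_def]; nlinarith
  have ha0 : (0:ℝ) < a := lt_trans hdR had
  set l : ℝ := (1 - d / a) / 2 with hl_def
  have hda : 0 < (d:ℝ)/a := div_pos hdR ha0
  have hda1 : (d:ℝ)/a < 1 := (div_lt_one ha0).mpr had
  have hl0 : 0 ≤ l := by simp only [hl_def]; linarith
  have hlhalf : l < 1/2 := by simp only [hl_def]; linarith
  have h1sub : 1 - 2*l = (d:ℝ)/a := by simp only [hl_def]; ring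
  -- the exponential moment
  set X : (Fin d → ℝ) → ℝ := fun x => ∑ i, (x i)^2 with hX
  have hexp_eq : (fun x : Fin d → ℝ => rexp (l * X x))
      = fun x => ∏ i, rexp (l * (x i)^2) := by
    funext x
    rw [hX, Finset.mul_sum, Real.exp_sum]
  have hint : Integrable (fun x => rexp (l * X x)) μP := by
    rw [hexp_eq]
    exact chi_prod_integrable d (chi_integrable hlhalf)
  have hmgf : mgf X μP l = ((Real.sqrt (1 - 2*l))⁻¹) ^ d := by
    rw [mgf]
    calc ∫ x, rexp (l * X x) ∂μP = ∫ x : Fin d → ℝ, ∏ i, rexp (l * (x i)^2) ∂μP := by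
          rw [hexp_eq]
      _ = (∫ x, rexp (l * x^2) ∂(gaussianReal 0 1)) ^ d :=
          chi_prod_integral (μ := gaussianReal 0 1) d (fun y => rexp (l * y^2))
      _ = ((Real.sqrt (1 - 2*l))⁻¹) ^ d := by rw [chi_integral hlhalf]
  have hch := measure_ge_le_exp_mul_mgf (X := X) (μ := μP) (t := l) a hl0 hint
  rw [hmgf] at hch
  -- numeric bound
  set B : ℝ := rexp (-l * a) * ((Real.sqrt (1 - 2*l))⁻¹) ^ d with hB
  have hu0 : (0:ℝ) < 1 - 2*l := by rw [h1sub]; exact hda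
  have hB0 : 0 ≤ B := by positivity
  have hsq_u : ((Real.sqrt (1 - 2*l))⁻¹)^2 = a/(d:ℝ) := by
    rw [← Real.sqrt_inv, Real.sq_sqrt (by positivity), h1sub, inv_div]
  have hla : 2 * (l * a) = a - (d:ℝ) := by
    have h2 : (1 - 2*l) * a = d := by rw [h1sub]; field_simp
    nlinarith [h2]
  have hBsq : B^2 = rexp ((d:ℝ) - a) * (a/d)^d := by
    rw [hB, mul_pow, ← pow_mul, mul_comm d 2, pow_mul, hsq_u, pow_two, ← Real.exp_add]
    congr 1
    rw [Real.exp_eq_exp]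
    linarith [hla]
  have hδexp : δ = rexp (-t) := by
    rw [ht_def, one_div, Real.log_inv, neg_neg, Real.exp_log hδ0]
  set s : ℝ := Real.sqrt (t/d) with hs_def
  have hs0 : 0 ≤ s := Real.sqrt_nonneg _
  have hs2 : s^2 = t/d := Real.sq_sqrt (div_nonneg ht.le hdR.le)
  have hdt : Real.sqrt ((d:ℝ)*t) = d * s := by
    have hsq' : ((d:ℝ) * s)^2 = d*t := by
      rw [mul_pow, hs2]
      field_simp
    rw [← hsq', Real.sqrt_sq (by positivity)]
  have key1 : a/(d:ℝ) = 1 + 2*s + 2*s^2 := by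
    rw [ha_def, hdt, hs2]
    field_simp
  have key2 : 1 + 2*s + 2*s^2 ≤ rexp (2*s) := by
    have h3 := Real.sum_le_exp_of_nonneg (by linarith : (0:ℝ) ≤ 2*s) 3
    norm_num [Finset.sum_range_succ] at h3
    nlinarith [h3]
  have key3 : (a/(d:ℝ))^d ≤ rexp (2*Real.sqrt ((d:ℝ)*t)) := by
    calc (a/(d:ℝ))^d ≤ (rexp (2*s))^d :=
          pow_le_pow_left₀ (by positivity) (by rw [key1]; exact key2) d
      _ = rexp ((d:ℕ) * (2*s)) := (Real.exp_nat_mul _ d).symm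
      _ = rexp (2*Real.sqrt ((d:ℝ)*t)) := by rw [hdt]; ring_nf
  have hB2 : B^2 ≤ δ^2 := by
    rw [hBsq, hδexp]
    calc rexp ((d:ℝ) - a) * (a/(d:ℝ))^d
        ≤ rexp ((d:ℝ) - a) * rexp (2*Real.sqrt ((d:ℝ)*t)) :=
          mul_le_mul_of_nonneg_left key3 (Real.exp_nonneg _)
      _ = rexp ((d:ℝ) - a + 2*Real.sqrt ((d:ℝ)*t)) := (Real.exp_add _ _).symm
      _ = rexp (-t) ^ 2 := by
          rw [pow_two, ← Real.exp_add]
          congr 1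
          rw [ha_def]; ring
  have hBδ : B ≤ δ := by
    nlinarith [hB2, hB0, hδ0]
  -- measure bound
  have hXm : Measurable X := by
    apply Finset.measurable_sum
    intro i _
    exact (measurable_pi_apply i).pow_const 2
  have hSm : MeasurableSet {x : Fin d → ℝ | X x ≤ a} :=
    measurableSet_le hXm measurable_const
  have hcompl : μP {x : Fin d → ℝ | X x ≤ a}ᶜ ≤ ENNReal.ofReal δ := by
    have hsub : {x : Fin d → ℝ | X x ≤ a}ᶜ ⊆ {x : Fin d → ℝ | a ≤ X x} := by
      intro x hx
      simp only [Set.mem_compl_iff, Set.mem_setOf_eq, not_le] at hx ⊢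
      exact le_of_lt hx
    refine le_trans (measure_mono hsub) ?_
    rw [ENNReal.le_ofReal_iff_toReal_le (measure_ne_top _ _) (le_of_lt hδ0)]
    exact le_trans hch hBδ
  have hunion : (1:ℝ≥0∞) ≤ μP {x : Fin d → ℝ | X x ≤ a} + ENNReal.ofReal δ := by
    calc (1:ℝ≥0∞) = μP Set.univ := measure_univ.symm
      _ = μP ({x : Fin d → ℝ | X x ≤ a} ∪ {x : Fin d → ℝ | X x ≤ a}ᶜ) := by
          rw [Set.union_compl_self]
      _ ≤ μP {x : Fin d → ℝ | X x ≤ a} + μP {x : Fin d → ℝ | X x ≤ a}ᶜ :=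
          measure_union_le _ _
      _ ≤ _ := add_le_add_right hcompl _
  have : ENNReal.ofReal (1 - δ) + ENNReal.ofReal δ ≤
      μP {x : Fin d → ℝ | X x ≤ a} + ENNReal.ofReal δ := by
    refine le_trans ?_ hunion
    rw [← ENNReal.ofReal_add (by linarith) (le_of_lt hδ0)]
    simp
  exact (ENNReal.add_le_add_iff_right ENNReal.ofReal_ne_top).mp this
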